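/- Let G be the disjoint union of k directed paths with m nodes each (n = km). For every r ≥ 2 and every g ∈ ℤ⁺: the optimal MPP cost with k processors and memory bound r per processor equals m, while the optimal MPP cost with 1 processor and memory bound k·r equals k·m. In particular OPT^(k)/OPT^(1) = 1/k, so the factor-1/k bound of the fair comparison is tight. -/

import Mathlib

open scoped Classical

/-- A relation is a DAG edge relation if its transitive closure is irreflexive
(i.e., the directed graph is acyclic). -/
def IsDag {V : Type*} (E : V → V → Prop) : Prop := Irreflexive (Relation.TransGen E)

namespace MPP

variable {V : Type*} [DecidableEq V] {k : ℕ}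

/-- A configuration of multiprocessor red-blue pebbling: a set of red pebbles
for each of the `k` processors, and a set of blue pebbles. -/
structure Conf (V : Type*) (k : ℕ) where
  red : Fin k → Finset V
  blue : Finset V

/-- Moves of multiprocessor red-blue pebbling. `save`/`load` are the parallel I/O
moves (R1-M)/(R2-M), `compute` is (R3-M), and the removals are (R4-M). -/
inductive Move (V : Type*) (k : ℕ) where
  | save (m : ℕ) (f : Fin m → Fin k) (v : Fin m → V)
  | load (m : ℕ) (f : Fin m → Fin k) (v : Fin m → V)
  | compute (m : ℕ) (f : Fin m → Fin k) (v : Fin m → V)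
  | removeRed (j : Fin k) (x : V)
  | removeBlue (x : V)

/-- Add, for each `i`, the node `v i` to the red pebbles of processor `f i`. -/
def addRed (C : Conf V k) {m : ℕ} (f : Fin m → Fin k) (v : Fin m → V) :
    Fin k → Finset V :=
  fun j => C.red j ∪ (Finset.univ.filter (fun i => f i = j)).image v

/-- The effect of a move on a configuration. -/
def apply : Move V k → Conf V k → Conf V k
  | .save _ _ v, C => ⟨C.red, C.blue ∪ Finset.univ.image v⟩
  | .load _ f v, C => ⟨addRed C f v, C.blue⟩
  | .compute _ f v, C => ⟨addRed C f v, C.blue⟩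
  | .removeRed j x, C => ⟨Function.update C.red j (C.red j \ {x}), C.blue⟩
  | .removeBlue x, C => ⟨C.red, C.blue \ {x}⟩

/-- When a move may legally be performed in a given configuration. -/
def Legal (E : V → V → Prop) : Conf V k → Move V k → Prop
  | C, .save m f v => m ≤ k ∧ Function.Injective f ∧ ∀ i, v i ∈ C.red (f i)
  | C, .load m f v => m ≤ k ∧ Function.Injective f ∧ ∀ i, v i ∈ C.blue
  | C, .compute m f v =>
      m ≤ k ∧ Function.Injective f ∧ ∀ i, ∀ u, E u (v i) → u ∈ C.red (f i)
  | _, .removeRed _ _ => True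
  | _, .removeBlue _ => True

/-- A configuration respects the fast-memory bound `r` for every processor. -/
def Valid (r : ℕ) (C : Conf V k) : Prop := ∀ j, (C.red j).card ≤ r

/-- `Run E r C ms C'` : starting from configuration `C`, the list of moves `ms`
may be legally executed (respecting the memory bound `r` throughout) and leads
to configuration `C'`. -/
inductive Run (E : V → V → Prop) (r : ℕ) : Conf V k → List (Move V k) → Conf V k → Prop
  | nil (C : Conf V k) : Run E r C [] C
  | cons {C C'' : Conf V k} {mv : Move V k} {ms : List (Move V k)} :
      Legal E C mv → Valid r (apply mv C) → Run E r (apply mv C) ms C'' →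
      Run E r C (mv :: ms) C''

/-- Cost of a single move: `g` for I/O, `1` for compute, `0` for removal. -/
def moveCost (g : ℕ) : Move V k → ℕ
  | .save .. => g
  | .load .. => g
  | .compute .. => 1
  | .removeRed .. => 0
  | .removeBlue .. => 0

/-- Total cost of a sequence of moves. -/
def cost (g : ℕ) (ms : List (Move V k)) : ℕ := (ms.map (moveCost g)).sum

def isIO : Move V k → Bool
  | .save .. => true
  | .load .. => true
  | _ => false

/-- The number of I/O moves in a sequence of moves. -/
def ioCount (ms : List (Move V k)) : ℕ := (ms.filter isIO).length

def isCompute : Move V k → Bool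
  | .compute .. => true
  | _ => false

/-- The number of compute moves in a sequence of moves. -/
def computeCount (ms : List (Move V k)) : ℕ := (ms.filter isCompute).length

/-- A sink of the DAG: a node with no outgoing edge. -/
def IsSink (E : V → V → Prop) (v : V) : Prop := ∀ u, ¬ E v u

/-- A terminal configuration: every sink carries at least one pebble. -/
def Terminal (E : V → V → Prop) (C : Conf V k) : Prop :=
  ∀ v, IsSink E v → v ∈ C.blue ∨ ∃ j, v ∈ C.red j

/-- The initial (all-empty) configuration. -/
def init (V : Type*) (k : ℕ) : Conf V k := ⟨fun _ => ∅, ∅⟩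

/-- `ms` is a pebbling strategy: a legal run from the empty configuration ending
in a terminal configuration. -/
def IsPebbling (E : V → V → Prop) (r : ℕ) (ms : List (Move V k)) : Prop :=
  ∃ Cf, Run E r (init V k) ms Cf ∧ Terminal E Cf

/-- The optimal (minimum) cost of a pebbling strategy with `k` processors,
memory bound `r` per processor, and I/O cost `g`. -/
noncomputable def optCost (E : V → V → Prop) (k r g : ℕ) : ℕ :=
  sInf {c | ∃ ms : List (Move V k), IsPebbling E r ms ∧ cost g ms = c}

/-- The minimum number of I/O moves among all minimum-cost pebbling strategies. -/
noncomputable def optIO (E : V → V → Prop) (k r g : ℕ) : ℕ :=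
  sInf {q | ∃ ms : List (Move V k),
    IsPebbling E r ms ∧ cost g ms = optCost E k r g ∧ ioCount ms = q}

/-- The maximum in-degree `Δ_in` of the DAG. -/
noncomputable def maxInDeg (E : V → V → Prop) [Fintype V] : ℕ :=
  Finset.univ.sup fun v => (Finset.univ.filter fun u => E u v).card

/-- The set of nodes computed by a move. -/
def computes : Move V k → Set V
  | .compute _ _ v => Set.range v
  | _ => ∅

/-- `x` is computed by the move at position `s` of `ms`. -/
def ComputedAt (ms : List (Move V k)) (s : ℕ) (x : V) : Prop :=
  ∃ mv, ms[s]? = some mv ∧ x ∈ computes mv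

/-- The set of nodes computed by some move strictly before position `t`. -/
def computedBefore (ms : List (Move V k)) (t : ℕ) : Set V :=
  {x | ∃ s < t, ComputedAt ms s x}

/-- `x` is ready at position `t`: it has not yet been computed, but all its
in-neighbors have been. -/
def Ready (E : V → V → Prop) (ms : List (Move V k)) (t : ℕ) (x : V) : Prop :=
  x ∉ computedBefore ms t ∧ ∀ u, E u x → u ∈ computedBefore ms t

/-- The number of nodes that are ready at position `t`. -/
noncomputable def readyCount (E : V → V → Prop) [Fintype V]
    (ms : List (Move V k)) (t : ℕ) : ℕ :=
  (Finset.univ.filter (Ready E ms t)).card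

end MPP

/-- The disjoint union of `k` directed paths with `m` nodes each. -/
def disjointPaths (k m : ℕ) : Fin k × Fin m → Fin k × Fin m → Prop :=
  fun a b => a.1 = b.1 ∧ (b.2 : ℕ) = (a.2 : ℕ) + 1


namespace Stmt8Aux

open MPP

variable {V : Type*} [DecidableEq V] {k : ℕ} {E : V → V → Prop} {r : ℕ}

/-! ### Generic lower bound machinery -/

def compOf : Move V k → Finset V
  | .compute _ _ v => Finset.univ.image v
  | _ => ∅

def compSet : List (Move V k) → Finset V
  | [] => ∅
  | mv :: ms => compOf mv ∪ compSet ms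

def Pebbled (C : Conf V k) (x : V) : Prop := x ∈ C.blue ∨ ∃ j, x ∈ C.red j

lemma step_pebbled {C : Conf V k} {mv : Move V k} {x : V}
    (hL : Legal E C mv) (h : Pebbled (apply mv C) x) :
    Pebbled C x ∨ x ∈ compOf mv := by
  cases mv with
  | save mm f v =>
      obtain ⟨-, -, hv⟩ := hL
      rcases h with h | h
      · simp only [apply, Finset.mem_union, Finset.mem_image, Finset.mem_univ, true_and] at h
        rcases h with h | ⟨i, rfl⟩
        · exact Or.inl (Or.inl h)
        · exact Or.inl (Or.inr ⟨f i, hv i⟩)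
      · exact Or.inl (Or.inr h)
  | load mm f v =>
      obtain ⟨-, -, hv⟩ := hL
      rcases h with h | ⟨j, hj⟩
      · exact Or.inl (Or.inl h)
      · simp only [apply, addRed, Finset.mem_union, Finset.mem_image, Finset.mem_filter,
          Finset.mem_univ, true_and] at hj
        rcases hj with hj | ⟨i, -, rfl⟩
        · exact Or.inl (Or.inr ⟨j, hj⟩)
        · exact Or.inl (Or.inl (hv i))
  | compute mm f v =>
      rcases h with h | ⟨j, hj⟩
      · exact Or.inl (Or.inl h)
      · simp only [apply, addRed, Finset.mem_union, Finset.mem_image, Finset.mem_filter,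
          Finset.mem_univ, true_and] at hj
        rcases hj with hj | ⟨i, -, rfl⟩
        · exact Or.inl (Or.inr ⟨j, hj⟩)
        · exact Or.inr (by simp [compOf])
  | removeRed j y =>
      rcases h with h | ⟨j', hj'⟩
      · exact Or.inl (Or.inl h)
      · refine Or.inl (Or.inr ?_)
        by_cases hjj : j' = j
        · subst hjj
          simp only [apply, Function.update_self] at hj'
          exact ⟨j', (Finset.mem_sdiff.mp hj').1⟩
        · refine ⟨j', ?_⟩
          simpa only [apply, Function.update_of_ne hjj] using hj'
  | removeBlue y =>
      rcases h with h | h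
      · exact Or.inl (Or.inl (Finset.mem_sdiff.mp h).1)
      · exact Or.inl (Or.inr h)

lemma run_pebbled {C C' : Conf V k} {ms : List (Move V k)} {x : V}
    (h : Run E r C ms C') (hx : Pebbled C' x) : Pebbled C x ∨ x ∈ compSet ms := by
  induction h with
  | nil => exact Or.inl hx
  | cons hL hV hrun ih =>
      rcases ih hx with h' | h'
      · rcases step_pebbled hL h' with h'' | h''
        · exact Or.inl h''
        · exact Or.inr (by rw [compSet]; exact Finset.mem_union_left _ h'')
      · exact Or.inr (by rw [compSet]; exact Finset.mem_union_right _ h')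

lemma run_closure {C C' : Conf V k} {ms : List (Move V k)} {x u : V}
    (h : Run E r C ms C') (hx : x ∈ compSet ms) (hu : E u x) :
    Pebbled C u ∨ u ∈ compSet ms := by
  induction h with
  | nil => simp [compSet] at hx
  | cons hL hV hrun ih =>
      rw [compSet, Finset.mem_union] at hx
      rcases hx with hx | hx
      · rename_i C mv ms
        cases mv with
        | compute mm f v =>
            simp only [compOf, Finset.mem_image, Finset.mem_univ, true_and] at hx
            obtain ⟨i, rfl⟩ := hx
            exact Or.inl (Or.inr ⟨f i, hL.2.2 i u hu⟩)
        | save mm f v => simp [compOf] at hx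
        | load mm f v => simp [compOf] at hx
        | removeRed j y => simp [compOf] at hx
        | removeBlue y => simp [compOf] at hx
      · rcases ih hx with h' | h'
        · rcases step_pebbled hL h' with h'' | h''
          · exact Or.inl h''
          · exact Or.inr (by rw [compSet]; exact Finset.mem_union_left _ h'')
        · exact Or.inr (by rw [compSet]; exact Finset.mem_union_right _ h')

lemma run_card {C C' : Conf V k} {ms : List (Move V k)}
    (h : Run E r C ms C') : (compSet ms).card ≤ k * computeCount ms := by
  induction h with
  | nil => simp [compSet, computeCount]
  | cons hL hV hrun ih =>
      rw [compSet]
      refine le_trans (Finset.card_union_le _ _) ?_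
      rename_i C mv ms
      cases mv with
      | compute mm f v =>
          have h1 : (compOf (Move.compute mm f v : Move V k)).card ≤ k := by
            refine le_trans Finset.card_image_le ?_
            simpa using hL.1
          have h2 : computeCount (Move.compute mm f v :: ms) = computeCount ms + 1 := by
            rfl
          rw [h2, Nat.mul_succ]
          omega
      | save mm f v =>
          have h2 : computeCount (Move.save mm f v :: ms) = computeCount ms := by
            simp [computeCount, isCompute]
          rw [h2]
          simpa [compOf] using ih
      | load mm f v =>
          have h2 : computeCount (Move.load mm f v :: ms) = computeCount ms := by
            simp [computeCount, isCompute]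
          rw [h2]
          simpa [compOf] using ih
      | removeRed j y =>
          have h2 : computeCount (Move.removeRed j y :: ms) = computeCount ms := by
            simp [computeCount, isCompute]
          rw [h2]
          simpa [compOf] using ih
      | removeBlue y =>
          have h2 : computeCount (Move.removeBlue y :: ms) = computeCount ms := by
            simp [computeCount, isCompute]
          rw [h2]
          simpa [compOf] using ih

lemma computeCount_le_cost (g : ℕ) (ms : List (Move V k)) :
    computeCount ms ≤ cost g ms := by
  induction ms with
  | nil => simp [computeCount, cost]
  | cons mv ms ih =>
      have hc : cost g (mv :: ms) = moveCost g mv + cost g ms := by simp [cost]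
      rw [hc]
      cases mv with
      | compute mm f v =>
          have h2 : computeCount (Move.compute mm f v :: ms) = computeCount ms + 1 := by
            rfl
          rw [h2]
          have : moveCost g (Move.compute mm f v : Move V k) = 1 := rfl
          omega
      | save mm f v =>
          have h2 : computeCount (Move.save mm f v :: ms) = computeCount ms := by
            simp [computeCount, isCompute]
          rw [h2]; exact le_trans ih (Nat.le_add_left _ _)
      | load mm f v =>
          have h2 : computeCount (Move.load mm f v :: ms) = computeCount ms := by
            simp [computeCount, isCompute]
          rw [h2]; exact le_trans ih (Nat.le_add_left _ _)
      | removeRed j y =>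
          have h2 : computeCount (Move.removeRed j y :: ms) = computeCount ms := by
            simp [computeCount, isCompute]
          rw [h2]; exact le_trans ih (Nat.le_add_left _ _)
      | removeBlue y =>
          have h2 : computeCount (Move.removeBlue y :: ms) = computeCount ms := by
            simp [computeCount, isCompute]
          rw [h2]; exact le_trans ih (Nat.le_add_left _ _)

end Stmt8Aux

namespace Stmt8Aux

open MPP

/-! ### Facts about the disjoint-paths graph -/

lemma no_edge_to_zero {k m : ℕ} (u : Fin k × Fin m) (j : Fin k) (h0 : 0 < m) :
    ¬ disjointPaths k m u (j, ⟨0, h0⟩) := by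
  rintro ⟨-, h2⟩
  simp at h2

lemma edge_to_succ {k m : ℕ} {u : Fin k × Fin m} {j : Fin k} {i : ℕ} (h1 : i + 1 < m)
    (h : disjointPaths k m u (j, ⟨i + 1, h1⟩)) : u = (j, ⟨i, by omega⟩) := by
  obtain ⟨a, b⟩ := u
  obtain ⟨h2, h3⟩ := h
  simp only at h2 h3
  subst h2
  simp only [Prod.mk.injEq, true_and]
  apply Fin.ext
  simp only at h3 ⊢
  omega

lemma edge_succ {k m : ℕ} (j : Fin k) {i : ℕ} (h1 : i + 1 < m) :
    disjointPaths k m (j, ⟨i, by omega⟩) (j, ⟨i + 1, h1⟩) := ⟨rfl, rfl⟩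

lemma sink_val {k m : ℕ} (hm : 0 < m) (v : Fin k × Fin m)
    (hs : IsSink (disjointPaths k m) v) : (v.2 : ℕ) = m - 1 := by
  by_contra h
  have hlt := v.2.isLt
  have h1 : (v.2 : ℕ) + 1 < m := by omega
  exact hs (v.1, ⟨(v.2 : ℕ) + 1, h1⟩) ⟨rfl, rfl⟩

lemma last_sink {k m : ℕ} (hm : 0 < m) (j : Fin k) :
    IsSink (disjointPaths k m) (j, ⟨m - 1, by omega⟩) := by
  rintro u ⟨-, h2⟩
  have := u.2.isLt
  simp only at h2
  omega

/-! ### The lower bound -/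

lemma all_computed {k m r kp : ℕ} (hm : 0 < m) {ms : List (Move (Fin k × Fin m) kp)}
    {Cf : Conf (Fin k × Fin m) kp}
    (hrun : Run (disjointPaths k m) r (init (Fin k × Fin m) kp) ms Cf)
    (hterm : Terminal (disjointPaths k m) Cf) :
    ∀ x, x ∈ compSet ms := by
  have hpinit : ∀ x : Fin k × Fin m, ¬ Pebbled (init (Fin k × Fin m) kp) x := by
    rintro x (hx | ⟨j, hx⟩) <;> simp [init] at hx
  have hclo : ∀ x ∈ compSet ms, ∀ u, disjointPaths k m u x → u ∈ compSet ms :=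
    fun x hx u hu => (run_closure hrun hx hu).resolve_left (hpinit u)
  have key : ∀ t, ∀ j : Fin k, t ≤ m - 1 →
      ((j, ⟨m - 1 - t, by omega⟩) : Fin k × Fin m) ∈ compSet ms := by
    intro t
    induction t with
    | zero =>
        intro j _
        have hp : Pebbled Cf (j, ⟨m - 1, by omega⟩) := hterm _ (last_sink hm j)
        have := (run_pebbled hrun hp).resolve_left (hpinit _)
        simpa using this
    | succ t ih =>
        intro j ht
        have h1 := ih j (by omega)
        have hi1 : (m - 1 - (t + 1)) + 1 < m := by omega
        have hedge : disjointPaths k m (j, ⟨m - 1 - (t + 1), by omega⟩)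
            (j, ⟨(m - 1 - (t + 1)) + 1, hi1⟩) := edge_succ j hi1
        have heq : ((j, ⟨(m - 1 - (t + 1)) + 1, hi1⟩) : Fin k × Fin m)
            = (j, ⟨m - 1 - t, by omega⟩) := by
          simp only [Prod.mk.injEq, true_and]
          apply Fin.ext
          simp only
          omega
        rw [heq] at hedge
        exact hclo _ h1 _ hedge
  intro x
  obtain ⟨a, b⟩ := x
  have hb := b.isLt
  have h1 := key (m - 1 - (b : ℕ)) a (by omega)
  have hx : ((a, ⟨m - 1 - (m - 1 - (b : ℕ)), by omega⟩) : Fin k × Fin m) = (a, b) := by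
    simp only [Prod.mk.injEq, true_and]
    apply Fin.ext
    simp only
    omega
  rwa [hx] at h1

lemma lower_bound {k m r g kp : ℕ} (hm : 0 < m)
    {ms : List (Move (Fin k × Fin m) kp)}
    (hpb : IsPebbling (disjointPaths k m) r ms) :
    k * m ≤ kp * cost g ms := by
  obtain ⟨Cf, hrun, hterm⟩ := hpb
  have hall := all_computed hm hrun hterm
  have huniv : compSet ms = Finset.univ := Finset.eq_univ_iff_forall.mpr hall
  have hcard : (compSet ms).card = k * m := by
    rw [huniv, Finset.card_univ]
    simp
  calc k * m = (compSet ms).card := hcard.symm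
    _ ≤ kp * computeCount ms := run_card hrun
    _ ≤ kp * cost g ms := Nat.mul_le_mul_left _ (computeCount_le_cost g ms)

end Stmt8Aux

namespace Stmt8Aux

open MPP

variable {V : Type*} [DecidableEq V] {k : ℕ} {E : V → V → Prop} {r : ℕ}

/-! ### Generic run-building helpers -/

lemma run_append {C C' C'' : Conf V k} {ms ms' : List (Move V k)}
    (h1 : Run E r C ms C') (h2 : Run E r C' ms' C'') : Run E r C (ms ++ ms') C'' := by
  induction h1 with
  | nil => exact h2
  | cons hL hV hrun ih => exact Run.cons hL hV (ih h2)

lemma run_cast {C C1 C2 : Conf V k} {ms : List (Move V k)}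
    (h : Run E r C ms C1) (he : C1 = C2) : Run E r C ms C2 := he ▸ h

lemma cost_append (g : ℕ) (ms ms' : List (Move V k)) :
    cost g (ms ++ ms') = cost g ms + cost g ms' := by
  simp [cost]

lemma cost_removals (g : ℕ) (x : Fin k → V) (js : List (Fin k)) :
    cost g (js.map (fun j => (Move.removeRed j (x j) : Move V k))) = 0 := by
  induction js with
  | nil => simp [cost]
  | cons j js ih => simpa [cost, moveCost] using ih

lemma pair_sdiff {a b : V} (h : b ≠ a) :
    insert b {a} \ ({a} : Finset V) = {b} := by
  ext y
  simp only [Finset.mem_sdiff, Finset.mem_insert, Finset.mem_singleton]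
  constructor
  · rintro ⟨hy | hy, hy2⟩
    · exact hy
    · exact absurd hy hy2
  · rintro rfl
    exact ⟨Or.inl rfl, h⟩

lemma insert_insert_sdiff {a b : V} {S : Finset V} (hab : b ≠ a) (ha : a ∉ S) :
    (insert b (insert a S)) \ {a} = insert b S := by
  ext y
  simp only [Finset.mem_sdiff, Finset.mem_insert, Finset.mem_singleton]
  constructor
  · rintro ⟨hy | hy | hy, h2⟩
    · exact Or.inl hy
    · exact absurd hy h2
    · exact Or.inr hy
  · rintro (rfl | hy)
    · exact ⟨Or.inl rfl, hab⟩
    · exact ⟨Or.inr (Or.inr hy), fun h => ha (h ▸ hy)⟩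

lemma remove_run (x : Fin k → V) (js : List (Fin k)) :
    ∀ (C : Conf V k), js.Nodup → Valid r C →
    Run E r C (js.map (fun j => Move.removeRed j (x j)))
      ⟨fun j => if j ∈ js then C.red j \ {x j} else C.red j, C.blue⟩ := by
  induction js with
  | nil =>
      intro C _ _
      have heq : C = (⟨fun j => if j ∈ ([] : List (Fin k)) then C.red j \ {x j} else C.red j,
          C.blue⟩ : Conf V k) := by
        obtain ⟨red, blue⟩ := C
        congr 1
      exact run_cast (Run.nil C) heq
  | cons j js ih =>
      intro C hnd hV
      have hj : j ∉ js := (List.nodup_cons.mp hnd).1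
      have hD : apply (Move.removeRed j (x j)) C
          = (⟨Function.update C.red j (C.red j \ {x j}), C.blue⟩ : Conf V k) := rfl
      have hVD : Valid r (apply (Move.removeRed j (x j)) C) := by
        rw [hD]
        intro j'
        by_cases h : j' = j
        · subst h
          simp only [Function.update_self]
          exact le_trans (Finset.card_le_card Finset.sdiff_subset) (hV j')
        · simp only [Function.update_of_ne h]
          exact hV j'
      have h2 := ih (apply (Move.removeRed j (x j)) C) (List.nodup_cons.mp hnd).2 hVD
      have heq : (⟨fun j' => if j' ∈ js then (apply (Move.removeRed j (x j)) C).red j' \ {x j'}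
            else (apply (Move.removeRed j (x j)) C).red j',
            (apply (Move.removeRed j (x j)) C).blue⟩ : Conf V k)
          = ⟨fun j' => if j' ∈ j :: js then C.red j' \ {x j'} else C.red j', C.blue⟩ := by
        have hred : (apply (Move.removeRed j (x j)) C).red
            = Function.update C.red j (C.red j \ {x j}) := rfl
        have hblue : (apply (Move.removeRed j (x j)) C).blue = C.blue := rfl
        rw [Conf.mk.injEq]
        refine ⟨?_, hblue⟩
        funext j'
        by_cases h1 : j' = j
        · subst h1
          simp [hred, hj, Function.update_self, List.mem_cons]
        · simp [hred, Function.update_of_ne h1, List.mem_cons, h1]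
      exact Run.cons trivial hVD (run_cast h2 heq)

end Stmt8Aux

namespace Stmt8Aux

open MPP

/-! ### The k-processor strategy -/

lemma addRed_id {V : Type*} [DecidableEq V] {k : ℕ} (C : Conf V k) (v : Fin k → V) :
    addRed C (id : Fin k → Fin k) v = fun j => insert (v j) (C.red j) := by
  funext j
  rw [addRed]
  have hf : (Finset.univ.filter (fun i => (id : Fin k → Fin k) i = j)) = {j} := by
    ext i
    simp [eq_comm]
  rw [hf, Finset.image_singleton, Finset.union_comm]
  rfl

def confK (k m : ℕ) (i : Fin m) : Conf (Fin k × Fin m) k := ⟨fun j => {(j, i)}, ∅⟩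

def colMove (k m : ℕ) (i : Fin m) : Move (Fin k × Fin m) k :=
  .compute k id (fun j => (j, i))

lemma colrun {k m : ℕ} (r g : ℕ) (hk : 0 < k) (hm : 0 < m) (hr : 2 ≤ r) :
    ∀ i : ℕ, ∀ hi : i < m, ∃ ms : List (Move (Fin k × Fin m) k),
      Run (disjointPaths k m) r (init (Fin k × Fin m) k) ms (confK k m ⟨i, hi⟩) ∧
      cost g ms = i + 1 := by
  intro i
  induction i with
  | zero =>
      intro hi
      refine ⟨[colMove k m ⟨0, hi⟩], ?_, by simp [cost, colMove, moveCost]⟩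
      have happly : apply (colMove k m ⟨0, hi⟩) (init (Fin k × Fin m) k)
          = confK k m ⟨0, hi⟩ := by
        show (⟨addRed _ id _, _⟩ : Conf (Fin k × Fin m) k) = _
        rw [addRed_id, confK]
        simp [init]
      have hL : Legal (disjointPaths k m) (init (Fin k × Fin m) k) (colMove k m ⟨0, hi⟩) :=
        ⟨le_rfl, Function.injective_id, fun j u hu => absurd hu (no_edge_to_zero u j hm)⟩
      have hV : Valid r (apply (colMove k m ⟨0, hi⟩) (init (Fin k × Fin m) k)) := by
        rw [happly]
        intro j
        simp [confK]
        omega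
      exact Run.cons hL hV (run_cast (Run.nil _) happly)
  | succ i ih =>
      intro hi1
      have hi : i < m := by omega
      obtain ⟨ms, hrun, hcost⟩ := ih hi
      have hne : ∀ j : Fin k, ((j, ⟨i + 1, hi1⟩) : Fin k × Fin m) ≠ (j, ⟨i, hi⟩) := by
        intro j h
        have h2 := congrArg (fun p : Fin k × Fin m => (p.2 : ℕ)) h
        simp only at h2
        omega
      -- the compute move
      have hL : Legal (disjointPaths k m) (confK k m ⟨i, hi⟩) (colMove k m ⟨i + 1, hi1⟩) := by
        refine ⟨le_rfl, Function.injective_id, fun j u hu => ?_⟩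
        have := edge_to_succ hi1 hu
        subst this
        simp [confK]
      have happly : apply (colMove k m ⟨i + 1, hi1⟩) (confK k m ⟨i, hi⟩)
          = (⟨fun j => insert (j, ⟨i + 1, hi1⟩) {(j, ⟨i, hi⟩)}, ∅⟩ :
              Conf (Fin k × Fin m) k) := by
        show (⟨addRed _ id _, _⟩ : Conf (Fin k × Fin m) k) = _
        rw [addRed_id]
        rfl
      have hV : Valid r (apply (colMove k m ⟨i + 1, hi1⟩) (confK k m ⟨i, hi⟩)) := by
        rw [happly]
        intro j
        refine le_trans (Finset.card_insert_le _ _) ?_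
        simp
        omega
      -- the removals
      have hrem := remove_run (E := disjointPaths k m) (r := r)
        (fun j : Fin k => ((j, ⟨i, hi⟩) : Fin k × Fin m)) (List.finRange k)
        (apply (colMove k m ⟨i + 1, hi1⟩) (confK k m ⟨i, hi⟩)) (List.nodup_finRange k) hV
      have heq : (⟨fun j => if j ∈ List.finRange k
            then (apply (colMove k m ⟨i + 1, hi1⟩) (confK k m ⟨i, hi⟩)).red j \ {(j, ⟨i, hi⟩)}
            else (apply (colMove k m ⟨i + 1, hi1⟩) (confK k m ⟨i, hi⟩)).red j,
            (apply (colMove k m ⟨i + 1, hi1⟩) (confK k m ⟨i, hi⟩)).blue⟩ :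
            Conf (Fin k × Fin m) k) = confK k m ⟨i + 1, hi1⟩ := by
        rw [happly, confK, Conf.mk.injEq]
        refine ⟨?_, rfl⟩
        funext j
        rw [if_pos (List.mem_finRange j)]
        exact pair_sdiff (hne j)
      have hrun2 : Run (disjointPaths k m) r (confK k m ⟨i, hi⟩)
          (colMove k m ⟨i + 1, hi1⟩ ::
            (List.finRange k).map (fun j => Move.removeRed j (j, ⟨i, hi⟩)))
          (confK k m ⟨i + 1, hi1⟩) :=
        Run.cons hL hV (run_cast hrem heq)
      refine ⟨ms ++ _, run_append hrun hrun2, ?_⟩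
      rw [cost_append, hcost]
      have : cost g (colMove k m ⟨i + 1, hi1⟩ ::
          (List.finRange k).map (fun j => Move.removeRed j ((j, ⟨i, hi⟩) : Fin k × Fin m))) =
          1 + cost g ((List.finRange k).map
            (fun j => Move.removeRed j ((j, ⟨i, hi⟩) : Fin k × Fin m))) := by
        simp [cost, colMove, moveCost]
      rw [this, cost_removals]

lemma upper_k {k m : ℕ} (r g : ℕ) (hk : 0 < k) (hm : 0 < m) (hr : 2 ≤ r) :
    ∃ ms : List (Move (Fin k × Fin m) k),
      IsPebbling (disjointPaths k m) r ms ∧ cost g ms = m := by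
  obtain ⟨ms, hrun, hcost⟩ := colrun r g hk hm hr (m - 1) (by omega)
  refine ⟨ms, ⟨confK k m ⟨m - 1, by omega⟩, hrun, ?_⟩, by omega⟩
  intro v hv
  right
  refine ⟨v.1, ?_⟩
  have h1 := sink_val hm v hv
  have hv2 : v = (v.1, ⟨m - 1, by omega⟩) := by
    obtain ⟨a, b⟩ := v
    simp only [Prod.mk.injEq, true_and]
    exact Fin.ext h1
  rw [confK]
  simp only [Finset.mem_singleton]
  exact hv2

end Stmt8Aux

namespace Stmt8Aux

open MPP

/-! ### The 1-processor strategy -/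

def conf1 {V : Type*} (S : Finset V) : Conf V 1 := ⟨fun _ => S, ∅⟩

def cpt {V : Type*} (w : V) : Move V 1 := .compute 1 (fun _ => 0) (fun _ => w)

def rmv {V : Type*} (w : V) : Move V 1 := .removeRed 0 w

lemma apply_cpt {V : Type*} [DecidableEq V] (S : Finset V) (w : V) :
    apply (cpt w) (conf1 S) = conf1 (insert w S) := by
  show (⟨addRed (conf1 S) _ _, _⟩ : Conf V 1) = _
  rw [conf1, conf1, Conf.mk.injEq]
  refine ⟨?_, rfl⟩
  funext j
  have hj : j = 0 := Subsingleton.elim _ _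
  subst hj
  rw [addRed]
  ext y
  simp only [Finset.mem_union, Finset.mem_image, Finset.mem_filter, Finset.mem_univ,
    true_and, Finset.mem_insert]
  constructor
  · rintro (h | ⟨i, -, rfl⟩)
    · exact Or.inr h
    · exact Or.inl rfl
  · rintro (rfl | h)
    · refine Or.inr ?_
      first
      | exact ⟨0, rfl⟩
      | exact ⟨0, rfl, rfl⟩
      | exact rfl
      | exact ⟨0, Subsingleton.elim _ _, rfl⟩
    · exact Or.inl h

lemma apply_rmv {V : Type*} [DecidableEq V] (S : Finset V) (w : V) :
    apply (rmv w) (conf1 S) = conf1 (S \ {w}) := by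
  show (⟨Function.update _ 0 _, _⟩ : Conf V 1) = _
  rw [conf1, conf1, Conf.mk.injEq]
  refine ⟨?_, rfl⟩
  funext j
  have hj : j = 0 := Subsingleton.elim _ _
  subst hj
  rw [Function.update_self]

lemma valid_conf1 {V : Type*} {r : ℕ} {S : Finset V} (h : S.card ≤ r) :
    Valid r (conf1 S) := fun _ => h

lemma legal_cpt {V : Type*} [DecidableEq V] {E : V → V → Prop} {S : Finset V} {w : V}
    (h : ∀ u, E u w → u ∈ S) : Legal E (conf1 S) (cpt w) :=
  ⟨le_rfl, Function.injective_of_subsingleton _, fun _ u hu => h u hu⟩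

/-- `pathrun`: compute one whole path, keeping a set `S` of already-present pebbles. -/
lemma pathrun {k m : ℕ} (r g : ℕ) (hm : 0 < m) (j : Fin k) (S : Finset (Fin k × Fin m))
    (hS : ∀ i : Fin m, (j, i) ∉ S) (hc : S.card + 2 ≤ r) :
    ∀ i : ℕ, ∀ hi : i < m, ∃ ms : List (Move (Fin k × Fin m) 1),
      Run (disjointPaths k m) r (conf1 S) ms (conf1 (insert (j, ⟨i, hi⟩) S)) ∧
      cost g ms = i + 1 := by
  intro i
  induction i with
  | zero =>
      intro hi
      refine ⟨[cpt (j, ⟨0, hi⟩)], ?_, by simp [cost, cpt, moveCost]⟩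
      have hL : Legal (disjointPaths k m) (conf1 S) (cpt ((j, ⟨0, hi⟩) : Fin k × Fin m)) :=
        legal_cpt (fun u hu => absurd hu (no_edge_to_zero u j hm))
      have hV : Valid r (apply (cpt ((j, ⟨0, hi⟩) : Fin k × Fin m)) (conf1 S)) := by
        rw [apply_cpt]
        refine valid_conf1 (le_trans (Finset.card_insert_le _ _) ?_)
        omega
      exact Run.cons hL hV (run_cast (Run.nil _) (apply_cpt S _))
  | succ i ih =>
      intro hi1
      have hi : i < m := by omega
      obtain ⟨ms, hrun, hcost⟩ := ih hi
      have hne : ((j, ⟨i + 1, hi1⟩) : Fin k × Fin m) ≠ (j, ⟨i, hi⟩) := by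
        intro h
        have h2 := congrArg (fun p : Fin k × Fin m => (p.2 : ℕ)) h
        simp only at h2
        omega
      have hL : Legal (disjointPaths k m) (conf1 (insert ((j, ⟨i, hi⟩) : Fin k × Fin m) S))
          (cpt ((j, ⟨i + 1, hi1⟩) : Fin k × Fin m)) := by
        refine legal_cpt (fun u hu => ?_)
        have := edge_to_succ hi1 hu
        subst this
        exact Finset.mem_insert_self _ _
      have hV : Valid r (apply (cpt ((j, ⟨i + 1, hi1⟩) : Fin k × Fin m))
          (conf1 (insert ((j, ⟨i, hi⟩) : Fin k × Fin m) S))) := by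
        rw [apply_cpt]
        refine valid_conf1 (le_trans (Finset.card_insert_le _ _) ?_)
        have := Finset.card_insert_le ((j, ⟨i, hi⟩) : Fin k × Fin m) S
        omega
      have hV2 : Valid r (apply (rmv ((j, ⟨i, hi⟩) : Fin k × Fin m))
          (conf1 (insert ((j, ⟨i + 1, hi1⟩) : Fin k × Fin m)
            (insert ((j, ⟨i, hi⟩) : Fin k × Fin m) S)))) := by
        rw [apply_rmv, insert_insert_sdiff hne (hS ⟨i, hi⟩)]
        refine valid_conf1 (le_trans (Finset.card_insert_le _ _) ?_)
        omega
      have hrun2 : Run (disjointPaths k m) r (conf1 (insert ((j, ⟨i, hi⟩) : Fin k × Fin m) S))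
          [cpt ((j, ⟨i + 1, hi1⟩) : Fin k × Fin m), rmv ((j, ⟨i, hi⟩) : Fin k × Fin m)]
          (conf1 (insert ((j, ⟨i + 1, hi1⟩) : Fin k × Fin m) S)) := by
        refine Run.cons hL hV ?_
        have hcast1 : apply (cpt ((j, ⟨i + 1, hi1⟩) : Fin k × Fin m))
            (conf1 (insert ((j, ⟨i, hi⟩) : Fin k × Fin m) S))
            = conf1 (insert ((j, ⟨i + 1, hi1⟩) : Fin k × Fin m)
                (insert ((j, ⟨i, hi⟩) : Fin k × Fin m) S)) := apply_cpt _ _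
        rw [hcast1]
        refine Run.cons trivial ?_ ?_
        · rw [← hcast1] at hV2
          rw [hcast1] at hV2
          exact hV2
        · have hcast2 : apply (rmv ((j, ⟨i, hi⟩) : Fin k × Fin m))
              (conf1 (insert ((j, ⟨i + 1, hi1⟩) : Fin k × Fin m)
                (insert ((j, ⟨i, hi⟩) : Fin k × Fin m) S)))
              = conf1 (insert ((j, ⟨i + 1, hi1⟩) : Fin k × Fin m) S) := by
            rw [apply_rmv, insert_insert_sdiff hne (hS ⟨i, hi⟩)]
          exact run_cast (Run.nil _) hcast2
      refine ⟨ms ++ _, run_append hrun hrun2, ?_⟩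
      rw [cost_append, hcost]
      simp [cost, cpt, rmv, moveCost]

def S0 (k m j : ℕ) (hm : 0 < m) : Finset (Fin k × Fin m) :=
  (Finset.univ.filter (fun a : Fin k => (a : ℕ) < j)).image
    (fun a => (a, ⟨m - 1, by omega⟩))

lemma S0_card {k m j : ℕ} (hm : 0 < m) : (S0 k m j hm).card ≤ j := by
  refine le_trans Finset.card_image_le ?_
  have := Finset.card_le_card_of_injOn (f := fun a : Fin k => (a : ℕ))
    (t := Finset.range j) (s := Finset.univ.filter (fun a : Fin k => (a : ℕ) < j))
    (fun a ha => by simp at ha ⊢; exact ha)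
    (fun a _ b _ h => Fin.ext h)
  simpa using this

lemma S0_not_mem {k m j' : ℕ} (hm : 0 < m) (j : Fin k) (hj : j' ≤ (j : ℕ)) (i : Fin m) :
    (j, i) ∉ S0 k m j' hm := by
  rw [S0]
  simp only [Finset.mem_image, Finset.mem_filter, Finset.mem_univ, true_and, not_exists]
  rintro a ⟨ha, h⟩
  rw [Prod.mk.injEq] at h
  obtain ⟨rfl, -⟩ := h
  omega

lemma S0_succ {k m : ℕ} (hm : 0 < m) {j : ℕ} (hj : j < k) :
    S0 k m (j + 1) hm
      = insert ((⟨j, hj⟩ : Fin k), (⟨m - 1, by omega⟩ : Fin m)) (S0 k m j hm) := by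
  ext y
  rw [S0, S0]
  simp only [Finset.mem_image, Finset.mem_filter, Finset.mem_univ, true_and,
    Finset.mem_insert]
  constructor
  · rintro ⟨a, ha, rfl⟩
    rcases Nat.lt_succ_iff_lt_or_eq.mp ha with h | h
    · exact Or.inr ⟨a, h, rfl⟩
    · exact Or.inl (by rw [Prod.mk.injEq]; exact ⟨Fin.ext h, rfl⟩)
  · rintro (rfl | ⟨a, ha, rfl⟩)
    · exact ⟨⟨j, hj⟩, Nat.lt_succ_self j, rfl⟩
    · exact ⟨a, by omega, rfl⟩

lemma upper_1 {k m : ℕ} (r g : ℕ) (hk : 0 < k) (hm : 0 < m) (hr : 2 ≤ r) :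
    ∃ ms : List (Move (Fin k × Fin m) 1),
      IsPebbling (disjointPaths k m) (k * r) ms ∧ cost g ms = k * m := by
  have hkr : k + 1 ≤ k * r := by
    have : k * 2 ≤ k * r := Nat.mul_le_mul_left k hr
    omega
  have main : ∀ j : ℕ, j ≤ k → ∃ ms : List (Move (Fin k × Fin m) 1),
      Run (disjointPaths k m) (k * r) (init (Fin k × Fin m) 1) ms (conf1 (S0 k m j hm)) ∧
      cost g ms = j * m := by
    intro j
    induction j with
    | zero =>
        intro _
        refine ⟨[], ?_, by simp [cost]⟩
        have h0 : init (Fin k × Fin m) 1 = conf1 (S0 k m 0 hm) := by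
          rw [init, conf1, Conf.mk.injEq]
          refine ⟨?_, rfl⟩
          funext j
          rw [S0]
          ext y
          simp
        exact run_cast (Run.nil _) h0
    | succ j ih =>
        intro hjk
        have hj : j < k := by omega
        obtain ⟨ms, hrun, hcost⟩ := ih (by omega)
        have hcard : (S0 k m j hm).card + 2 ≤ k * r := by
          have := S0_card (k := k) (j := j) hm
          omega
        obtain ⟨ms2, hrun2, hcost2⟩ := pathrun (k * r) g hm ⟨j, hj⟩ (S0 k m j hm)
          (fun i => S0_not_mem hm ⟨j, hj⟩ le_rfl i) hcard (m - 1) (by omega)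
        have hend : insert ((⟨j, hj⟩ : Fin k), (⟨m - 1, by omega⟩ : Fin m)) (S0 k m j hm)
            = S0 k m (j + 1) hm := (S0_succ hm hj).symm
        rw [hend] at hrun2
        refine ⟨ms ++ ms2, run_append hrun hrun2, ?_⟩
        rw [cost_append, hcost, hcost2]
        have : (m - 1) + 1 = m := by omega
        rw [this, Nat.succ_mul]
  obtain ⟨ms, hrun, hcost⟩ := main k le_rfl
  refine ⟨ms, ⟨conf1 (S0 k m k hm), hrun, ?_⟩, hcost⟩
  intro v hv
  right
  refine ⟨0, ?_⟩
  have h1 := sink_val hm v hv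
  show v ∈ S0 k m k hm
  rw [S0]
  simp only [Finset.mem_image, Finset.mem_filter, Finset.mem_univ, true_and]
  refine ⟨v.1, v.1.isLt, ?_⟩
  obtain ⟨a, b⟩ := v
  rw [Prod.mk.injEq]
  exact ⟨rfl, Fin.ext (by simpa using h1.symm)⟩

end Stmt8Aux

/-- Let `G` be the disjoint union of `k` directed paths with `m`
nodes each (`n = km`). For every `r ≥ 2` and `g ∈ ℤ⁺`: the optimal MPP cost with
`k` processors and memory bound `r` per processor equals `m`, while the optimal
MPP cost with 1 processor and memory bound `k·r` equals `k·m`; in particular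
`OPT⁽ᵏ⁾/OPT⁽¹⁾ = 1/k`, so the factor-`1/k` bound of the fair comparison is
tight. -/
theorem stmt8 (k m r g : ℕ) (hk : 0 < k) (hm : 0 < m) (hr : 2 ≤ r) (hg : 0 < g) :
    MPP.optCost (disjointPaths k m) k r g = m ∧
    MPP.optCost (disjointPaths k m) 1 (k * r) g = k * m := by
  constructor
  · rw [MPP.optCost]
    obtain ⟨ms, hpb, hcost⟩ := Stmt8Aux.upper_k (k := k) (m := m) r g hk hm hr
    have hmem : m ∈ {c | ∃ ms : List (MPP.Move (Fin k × Fin m) k),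
        MPP.IsPebbling (disjointPaths k m) r ms ∧ MPP.cost g ms = c} := ⟨ms, hpb, hcost⟩
    refine le_antisymm (Nat.sInf_le hmem) (le_csInf ⟨m, hmem⟩ ?_)
    rintro c ⟨ms', hpb', rfl⟩
    have h := Stmt8Aux.lower_bound (g := g) (kp := k) (r := r) hm hpb'
    exact Nat.le_of_mul_le_mul_left h hk
  · rw [MPP.optCost]
    obtain ⟨ms, hpb, hcost⟩ := Stmt8Aux.upper_1 (k := k) (m := m) r g hk hm hr
    have hmem : k * m ∈ {c | ∃ ms : List (MPP.Move (Fin k × Fin m) 1),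
        MPP.IsPebbling (disjointPaths k m) (k * r) ms ∧ MPP.cost g ms = c} := ⟨ms, hpb, hcost⟩
    refine le_antisymm (Nat.sInf_le hmem) (le_csInf ⟨_, hmem⟩ ?_)
    rintro c ⟨ms', hpb', rfl⟩
    have h := Stmt8Aux.lower_bound (g := g) (kp := 1) (r := k * r) hm hpb'
    simpa using h
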